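/- Let X be a compact Hausdorff space and f ∈ C(X) with ‖f‖_∞ = 1, and suppose K := {x ∈ X : f(x) = 1} = {x ∈ X : |f(x)| = 1}. Define g = Σ_{n=1}^∞ 2^{-n} f^n (the series converging uniformly on X). Then g ∈ C(X), ‖g‖_∞ = 1, g(x) = 1 for all x ∈ K, and |g(x)| < 1 for all x ∈ X \ K. -/

import Mathlib

/-- If `‖f‖∞ = 1` and its peak set `K = {f = 1} = {|f| = 1}` is nonempty, then
`g = Σ_{n≥1} 2^{-n} f^n` is continuous, has norm `1`, equals `1` on `K`, and
has modulus `< 1` off `K`. -/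
theorem stmt12 {X : Type*} [TopologicalSpace X] [CompactSpace X] [T2Space X]
    (f : C(X, ℂ)) (hf : ‖f‖ = 1)
    (K : Set X) (hK : K = {x | f x = 1}) (hK' : {x | ‖f x‖ = 1} = K)
    (hKne : K.Nonempty) :
    ∃ g : C(X, ℂ),
      (∀ x : X, HasSum (fun n : ℕ => (1 / 2 : ℂ) ^ (n + 1) * (f x) ^ (n + 1)) (g x)) ∧
      ‖g‖ = 1 ∧ (∀ x ∈ K, g x = 1) ∧ ∀ x ∉ K, ‖g x‖ < 1 := by
  have hb : ∀ x : X, ‖f x‖ ≤ 1 := by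
    intro x; simpa [hf] using f.norm_coe_le_norm x
  have hne : ∀ x : X, (2 : ℂ) - f x ≠ 0 := by
    intro x h
    have h2 : f x = 2 := by linear_combination -h
    have h3 := hb x
    rw [h2] at h3
    simp at h3
  set g : C(X, ℂ) := ⟨fun x => f x / (2 - f x),
    (map_continuous f).div (continuous_const.sub (map_continuous f)) hne⟩ with hg
  have hgx : ∀ x, g x = f x / (2 - f x) := fun x => rfl
  have hsum : ∀ x : X, HasSum (fun n : ℕ => (1 / 2 : ℂ) ^ (n + 1) * (f x) ^ (n + 1)) (g x) := by
    intro x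
    have hr : ‖f x / 2‖ < 1 := by
      rw [norm_div]
      have := hb x
      simp only [Complex.norm_ofNat]
      linarith
    have h1 := (hasSum_geometric_of_norm_lt_one hr).mul_left (f x / 2)
    have heq : (f x / 2) * (1 - f x / 2)⁻¹ = g x := by
      rw [hgx]
      have h2 : (1 : ℂ) - f x / 2 ≠ 0 := by
        intro h
        apply hne x
        linear_combination 2 * h
      field_simp
    rw [heq] at h1
    have hfun : (fun n : ℕ => (1 / 2 : ℂ) ^ (n + 1) * (f x) ^ (n + 1)) =
        fun n : ℕ => f x / 2 * (f x / 2) ^ n := by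
      funext n
      rw [← pow_succ', ← mul_pow]
      ring_nf
    rw [hfun]
    exact h1
  refine ⟨g, hsum, ?_, ?_, ?_⟩
  · obtain ⟨x₀, hx₀⟩ := hKne
    have hfx₀ : f x₀ = 1 := by rw [hK] at hx₀; exact hx₀
    have hgx₀ : g x₀ = 1 := by rw [hgx, hfx₀]; norm_num
    apply le_antisymm
    · apply (ContinuousMap.norm_le _ zero_le_one).2
      intro x
      rw [hgx, norm_div]
      have h1 : (1 : ℝ) ≤ ‖(2 : ℂ) - f x‖ := by
        have := norm_sub_norm_le (2 : ℂ) (f x)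
        have := hb x
        simp only [Complex.norm_ofNat] at *
        linarith
      calc ‖f x‖ / ‖(2:ℂ) - f x‖ ≤ ‖f x‖ / 1 := by
            apply div_le_div_of_nonneg_left (norm_nonneg _) one_pos h1 |>.trans_eq rfl
        _ ≤ 1 := by rw [div_one]; exact hb x
    · have := g.norm_coe_le_norm x₀
      rw [hgx₀] at this
      simpa using this
  · intro x hx
    have hfx : f x = 1 := by rw [hK] at hx; exact hx
    rw [hgx, hfx]; norm_num
  · intro x hx
    have hlt : ‖f x‖ < 1 := by
      rcases lt_or_eq_of_le (hb x) with h | h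
      · exact h
      · exfalso; apply hx; rw [← hK']; exact h
    rw [hgx]
    have h2 : (1 : ℝ) < ‖(2 : ℂ) - f x‖ := by
      have := norm_sub_norm_le (2 : ℂ) (f x)
      simp only [Complex.norm_ofNat] at *
      linarith
    have : ‖f x / (2 - f x)‖ = ‖f x‖ / ‖(2:ℂ) - f x‖ := by
      rw [norm_div]
    rw [this]
    rw [div_lt_one (by linarith)]
    linarith
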